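/- arXiv:2503.08691 — 3 statements merged into one kernel-verified Lean document; each statement's English description precedes it below -/
import Mathlib

section
/- There exist two finite connected topological spaces X₁ and X₂, a bijection f from the regular closed subsets of X₁ onto the regular closed subsets of X₂ satisfying f(∅)=∅, f(X₁)=X₂, f(A∪B)=f(A)∪f(B), f(closure(X₁∖A)) = closure(X₂∖f(A)), and A∩B ≠ ∅ if and only if f(A)∩f(B) ≠ ∅ for all regular closed A, B of X₁, and a regular closed subset A of X₁ such that the interior of A is a nonempty connected subspace of X₁ while the interior of f(A) is not a preconnected subspace of X₂. Hence internal connectedness is not definable from the contact relation on regular closed algebras, even over connected spaces. -/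
/-- A set is regular closed if it equals the closure of its interior. -/
def RegClosed {X : Type} [TopologicalSpace X] (A : Set X) : Prop :=
  A = closure (interior A)

/-- A contact-preserving Boolean isomorphism between the regular closed algebras of
`X₁` and `X₂`: a bijection `f` from the regular closed subsets of `X₁` onto those of
`X₂` with `f ∅ = ∅`, `f X₁ = X₂`, `f (A ∪ B) = f A ∪ f B`,
`f (closure (X₁ ∖ A)) = closure (X₂ ∖ f A)`, and `A ∩ B ≠ ∅ ↔ f A ∩ f B ≠ ∅`. -/
def ContactIso {X₁ X₂ : Type} [TopologicalSpace X₁] [TopologicalSpace X₂]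
    (f : Set X₁ → Set X₂) : Prop :=
  Set.BijOn f {A : Set X₁ | RegClosed A} {B : Set X₂ | RegClosed B} ∧
  f ∅ = ∅ ∧
  f Set.univ = Set.univ ∧
  (∀ A B : Set X₁, RegClosed A → RegClosed B → f (A ∪ B) = f A ∪ f B) ∧
  (∀ A : Set X₁, RegClosed A → f (closure Aᶜ) = closure (f A)ᶜ) ∧
  (∀ A B : Set X₁, RegClosed A → RegClosed B →
    ((A ∩ B).Nonempty ↔ (f A ∩ f B).Nonempty))

set_option synthInstance.maxSize 4096
set_option synthInstance.maxHeartbeats 2000000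
set_option maxHeartbeats 4000000

namespace Stmt10Aux

/-- The set with boolean indicator `g`. -/
def toSet {n : ℕ} (g : Fin n → Bool) : Set (Fin n) := {x | g x = true}

lemma mem_toSet {n : ℕ} {g : Fin n → Bool} {x : Fin n} : x ∈ toSet g ↔ g x = true := Iff.rfl

open Classical in
/-- The boolean indicator of a set. -/
noncomputable def toFun {n : ℕ} (A : Set (Fin n)) : Fin n → Bool :=
  fun x => decide (x ∈ A)

lemma toSet_toFun {n : ℕ} (A : Set (Fin n)) : toSet (toFun A) = A := by
  ext x
  by_cases hx : x ∈ A <;> simp [toSet, toFun, hx]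

lemma toFun_toSet {n : ℕ} (g : Fin n → Bool) : toFun (toSet g) = g := by
  funext x
  by_cases hx : g x = true <;> simp [toFun, toSet, hx] <;> simp_all

lemma toSet_inj {n : ℕ} {g h : Fin n → Bool} (hgh : toSet g = toSet h) : g = h := by
  have := congrArg toFun hgh
  rwa [toFun_toSet, toFun_toSet] at this

lemma toFun_union {n : ℕ} (A B : Set (Fin n)) :
    toFun (A ∪ B) = fun x => toFun A x || toFun B x := by
  funext x
  by_cases hx : x ∈ A <;> by_cases hy : x ∈ B <;>
    simp [toFun, Set.mem_union, hx, hy]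

lemma toFun_compl {n : ℕ} (A : Set (Fin n)) :
    toFun Aᶜ = fun x => ! toFun A x := by
  funext x
  by_cases hx : x ∈ A <;> simp [toFun, hx]

lemma toSet_union {n : ℕ} (g h : Fin n → Bool) :
    toSet (fun x => g x || h x) = toSet g ∪ toSet h := by
  ext x; simp [toSet, Set.mem_union]

lemma toSet_compl {n : ℕ} (g : Fin n → Bool) :
    toSet (fun x => ! g x) = (toSet g)ᶜ := by
  ext x; simp [toSet]

lemma toSet_false {n : ℕ} : toSet (fun _ : Fin n => false) = (∅ : Set (Fin n)) := by
  ext x; simp [toSet]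

lemma toSet_true {n : ℕ} : toSet (fun _ : Fin n => true) = (Set.univ : Set (Fin n)) := by
  ext x; simp [toSet]

lemma toSet_inter_nonempty {n : ℕ} (g h : Fin n → Bool) :
    (toSet g ∩ toSet h).Nonempty ↔ ∃ x, g x = true ∧ h x = true := by
  constructor
  · rintro ⟨x, hx1, hx2⟩; exact ⟨x, hx1, hx2⟩
  · rintro ⟨x, hx1, hx2⟩; exact ⟨x, hx1, hx2⟩

lemma toFun_eq_true_iff {n : ℕ} {A : Set (Fin n)} {x : Fin n} :
    toFun A x = true ↔ x ∈ A := by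
  simp [toFun]

lemma inter_nonempty_iff {n : ℕ} (A B : Set (Fin n)) :
    (A ∩ B).Nonempty ↔ ∃ x, toFun A x = true ∧ toFun B x = true := by
  constructor
  · rintro ⟨x, h1, h2⟩
    exact ⟨x, toFun_eq_true_iff.mpr h1, toFun_eq_true_iff.mpr h2⟩
  · rintro ⟨x, h1, h2⟩
    exact ⟨x, toFun_eq_true_iff.mp h1, toFun_eq_true_iff.mp h2⟩

/-- The Alexandrov topology of a (pre)order given by a boolean relation:
open sets are the up-sets. -/
def topo {n : ℕ} (r : Fin n → Fin n → Bool) : TopologicalSpace (Fin n) where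
  IsOpen S := ∀ ⦃x y⦄, r x y = true → x ∈ S → y ∈ S
  isOpen_univ := fun _ _ _ _ => trivial
  isOpen_inter := fun S T hS hT x y hr hx => ⟨hS hr hx.1, hT hr hx.2⟩
  isOpen_sUnion := fun C hC x y hr hx => by
    obtain ⟨S, hS, hxS⟩ := hx
    exact ⟨S, hS, hC S hS hr hxS⟩

lemma isOpen_topo_iff {n : ℕ} (r : Fin n → Fin n → Bool) (S : Set (Fin n)) :
    @IsOpen _ (topo r) S ↔ ∀ ⦃x y⦄, r x y = true → x ∈ S → y ∈ S := Iff.rfl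

/-- Boolean interior operator. -/
def intB {n : ℕ} (r : Fin n → Fin n → Bool) (g : Fin n → Bool) : Fin n → Bool :=
  fun y => decide (∀ z, r y z = true → g z = true)

/-- Boolean closure operator. -/
def clB {n : ℕ} (r : Fin n → Fin n → Bool) (g : Fin n → Bool) : Fin n → Bool :=
  fun y => decide (∃ z, r y z = true ∧ g z = true)

/-- Boolean openness predicate. -/
def openB {n : ℕ} (r : Fin n → Fin n → Bool) (g : Fin n → Bool) : Prop :=
  ∀ x y, r x y = true → g x = true → g y = true

instance {n : ℕ} (r : Fin n → Fin n → Bool) (g : Fin n → Bool) : Decidable (openB r g) :=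
  inferInstanceAs (Decidable (∀ x y, r x y = true → g x = true → g y = true))

section
variable {n : ℕ} (r : Fin n → Fin n → Bool)
  (hrefl : ∀ x, r x x = true)
  (htrans : ∀ x y z, r x y = true → r y z = true → r x z = true)

lemma isOpen_toSet_iff (g : Fin n → Bool) :
    @IsOpen _ (topo r) (toSet g) ↔ openB r g := by
  constructor
  · intro h x y hr hx
    exact h hr hx
  · intro h x y hr hx
    exact h x y hr hx

include htrans hrefl in
lemma interior_toSet (g : Fin n → Bool) :
    @interior _ (topo r) (toSet g) = toSet (intB r g) := by
  letI := topo r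
  ext y
  rw [mem_interior]
  constructor
  · rintro ⟨U, hUs, hU, hyU⟩
    rw [mem_toSet]
    simp only [intB, decide_eq_true_eq]
    intro z hz
    exact hUs (hU hz hyU)
  · intro hy
    rw [mem_toSet] at hy
    simp only [intB, decide_eq_true_eq] at hy
    refine ⟨toSet (r y), ?_, ?_, ?_⟩
    · intro z hz
      exact hy z hz
    · intro a b hab ha
      exact htrans y a b ha hab
    · exact hrefl y
  done

include htrans hrefl in
lemma closure_toSet (g : Fin n → Bool) :
    @closure _ (topo r) (toSet g) = toSet (clB r g) := by
  letI := topo r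
  ext y
  rw [mem_closure_iff, mem_toSet]
  simp only [clB, decide_eq_true_eq]
  constructor
  · intro h
    obtain ⟨z, hz1, hz2⟩ := h (toSet (r y))
      (fun a b hab ha => htrans y a b ha hab) (hrefl y)
    exact ⟨z, hz1, hz2⟩
  · rintro ⟨z, hz1, hz2⟩ o ho hyo
    exact ⟨z, ho hz1 hyo, hz2⟩

include htrans hrefl in
lemma regClosed_iff (A : Set (Fin n)) :
    @RegClosed _ (topo r) A ↔ clB r (intB r (toFun A)) = toFun A := by
  unfold RegClosed
  conv_lhs => rw [← toSet_toFun A]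
  rw [interior_toSet r hrefl htrans, closure_toSet r hrefl htrans]
  constructor
  · intro h
    exact (toSet_inj h).symm
  · intro h
    exact (congrArg toSet h).symm

include htrans hrefl in
lemma isPreconnected_toSet_iff (s : Fin n → Bool) :
    @IsPreconnected _ (topo r) (toSet s) ↔
      ∀ g h : Fin n → Bool, openB r g → openB r h →
        (∀ x, s x = true → g x = true ∨ h x = true) →
        (∃ x, s x = true ∧ g x = true) → (∃ x, s x = true ∧ h x = true) →
        ∃ x, s x = true ∧ g x = true ∧ h x = true := by
  letI := topo r
  constructor
  · intro H g h hg hh hcov hne1 hne2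
    obtain ⟨x, hx⟩ := H (toSet g) (toSet h)
      ((isOpen_toSet_iff r g).mpr hg) ((isOpen_toSet_iff r h).mpr hh)
      (fun x hx => hcov x hx)
      (by obtain ⟨x, h1, h2⟩ := hne1; exact ⟨x, h1, h2⟩)
      (by obtain ⟨x, h1, h2⟩ := hne2; exact ⟨x, h1, h2⟩)
    exact ⟨x, hx.1, hx.2.1, hx.2.2⟩
  · intro H u v hu hv hcov h1 h2
    obtain ⟨x, hx1, hx2, hx3⟩ := H (toFun u) (toFun v)
      (by rw [← isOpen_toSet_iff r, toSet_toFun]; exact hu)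
      (by rw [← isOpen_toSet_iff r, toSet_toFun]; exact hv)
      (by intro x hx
          have := hcov (a := x) hx
          rw [← toSet_toFun u, ← toSet_toFun v] at this
          exact this)
      (by obtain ⟨x, hx1, hx2⟩ := h1
          refine ⟨x, hx1, ?_⟩
          rw [← mem_toSet, toSet_toFun]; exact hx2)
      (by obtain ⟨x, hx1, hx2⟩ := h2
          refine ⟨x, hx1, ?_⟩
          rw [← mem_toSet, toSet_toFun]; exact hx2)
    refine ⟨x, hx1, ?_, ?_⟩
    · rw [← toSet_toFun u]; exact hx2
    · rw [← toSet_toFun v]; exact hx3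

end

/-- The preorder on the 5-point space `X₁`: `0 ≤ 2,3,4` and `1 ≤ 2,3`. -/
def r1 : Fin 5 → Fin 5 → Bool :=
  ![![true, false, true, true, true],
    ![false, true, true, true, false],
    ![false, false, true, false, false],
    ![false, false, false, true, false],
    ![false, false, false, false, true]]

/-- The preorder on the 4-point space `X₂`: `0 ≤ 1,2,3`. -/
def r2 : Fin 4 → Fin 4 → Bool :=
  ![![true, true, true, true],
    ![false, true, false, false],
    ![false, false, true, false],
    ![false, false, false, true]]

lemma r1_refl : ∀ x, r1 x x = true := by decide
lemma r1_trans : ∀ x y z, r1 x y = true → r1 y z = true → r1 x z = true := by decide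
lemma r2_refl : ∀ x, r2 x x = true := by decide
lemma r2_trans : ∀ x y z, r2 x y = true → r2 y z = true → r2 x z = true := by decide

/-- The Boolean-level map between the regular closed algebras. -/
def F (g : Fin 5 → Bool) : Fin 4 → Bool :=
  if g = (fun _ => false) then (fun _ => false)
  else if g = ![true, true, true, false, false] then ![true, true, false, false]
  else if g = ![true, true, false, true, false] then ![true, false, true, false]
  else if g = ![true, true, true, true, false] then ![true, true, true, false]
  else if g = ![true, false, false, false, true] then ![true, false, false, true]
  else if g = ![true, true, true, false, true] then ![true, true, false, true]
  else if g = ![true, true, false, true, true] then ![true, false, true, true]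
  else (fun _ => true)

/-- The map on sets. -/
noncomputable def f : Set (Fin 5) → Set (Fin 4) :=
  fun A => toSet (F (toFun A))

end Stmt10Aux

open Stmt10Aux in
/-- There exist finite connected spaces X₁, X₂, a contact-preserving
Boolean isomorphism f between their regular closed algebras, and a regular closed
A ⊆ X₁ whose interior is a nonempty connected subspace of X₁ while the interior of
f(A) is not a preconnected subspace of X₂.  Hence internal connectedness is not
definable from contact on regular closed algebras, even over connected spaces. -/
theorem stmt10 :
    ∃ (X₁ X₂ : Type) (t₁ : TopologicalSpace X₁) (t₂ : TopologicalSpace X₂),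
      Finite X₁ ∧ Finite X₂ ∧
      @ConnectedSpace X₁ t₁ ∧ @ConnectedSpace X₂ t₂ ∧
      ∃ f : Set X₁ → Set X₂,
        @ContactIso X₁ X₂ t₁ t₂ f ∧
        ∃ A : Set X₁,
          @RegClosed X₁ t₁ A ∧
          @IsConnected X₁ t₁ (@interior X₁ t₁ A) ∧
          ¬ @IsPreconnected X₂ t₂ (@interior X₂ t₂ (f A)) := by
  refine ⟨Fin 5, Fin 4, topo r1, topo r2, inferInstance, inferInstance, ?_, ?_,
    Stmt10Aux.f, ?_, ?_⟩
  · -- X₁ connected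
    refine @ConnectedSpace.mk _ (topo r1) (@PreconnectedSpace.mk _ (topo r1) ?_) ⟨0⟩
    rw [← toSet_true]
    rw [isPreconnected_toSet_iff r1 r1_refl r1_trans]
    decide
  · -- X₂ connected
    refine @ConnectedSpace.mk _ (topo r2) (@PreconnectedSpace.mk _ (topo r2) ?_) ⟨0⟩
    rw [← toSet_true]
    rw [isPreconnected_toSet_iff r2 r2_refl r2_trans]
    decide
  · -- ContactIso
    have key1 : ∀ a : Fin 5 → Bool, clB r1 (intB r1 a) = a →
        clB r2 (intB r2 (F a)) = F a := by decide
    have key2 : ∀ a b : Fin 5 → Bool, clB r1 (intB r1 a) = a →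
        clB r1 (intB r1 b) = b → F a = F b → a = b := by decide
    have key3 : ∀ b : Fin 4 → Bool, clB r2 (intB r2 b) = b →
        ∃ a : Fin 5 → Bool, clB r1 (intB r1 a) = a ∧ F a = b := by decide
    have key4 : ∀ a b : Fin 5 → Bool, clB r1 (intB r1 a) = a →
        clB r1 (intB r1 b) = b →
        F (fun x => a x || b x) = fun y => F a y || F b y := by decide
    have key5 : ∀ a : Fin 5 → Bool, clB r1 (intB r1 a) = a →
        F (clB r1 (fun x => ! a x)) = clB r2 (fun y => ! F a y) := by decide
    have key6 : ∀ a b : Fin 5 → Bool, clB r1 (intB r1 a) = a →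
        clB r1 (intB r1 b) = b →
        ((∃ x, a x = true ∧ b x = true) ↔ ∃ y, F a y = true ∧ F b y = true) := by
      decide
    refine ⟨⟨?_, ?_, ?_⟩, ?_, ?_, ?_, ?_, ?_⟩
    · -- MapsTo
      intro A hA
      simp only [Set.mem_setOf_eq] at hA ⊢
      rw [regClosed_iff r1 r1_refl r1_trans] at hA
      rw [regClosed_iff r2 r2_refl r2_trans]
      show clB r2 (intB r2 (toFun (toSet (F (toFun A))))) = toFun (toSet (F (toFun A)))
      rw [toFun_toSet]
      exact key1 _ hA
    · -- InjOn
      intro A hA B hB hf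
      simp only [Set.mem_setOf_eq] at hA hB
      rw [regClosed_iff r1 r1_refl r1_trans] at hA hB
      have h2 : F (toFun A) = F (toFun B) := toSet_inj hf
      have h3 := key2 _ _ hA hB h2
      rw [← toSet_toFun A, ← toSet_toFun B, h3]
    · -- SurjOn
      intro B hB
      simp only [Set.mem_setOf_eq] at hB
      rw [regClosed_iff r2 r2_refl r2_trans] at hB
      obtain ⟨a, ha, hFa⟩ := key3 _ hB
      refine ⟨toSet a, ?_, ?_⟩
      · simp only [Set.mem_setOf_eq]
        rw [regClosed_iff r1 r1_refl r1_trans, toFun_toSet]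
        exact ha
      · show toSet (F (toFun (toSet a))) = B
        rw [toFun_toSet, hFa, toSet_toFun]
    · -- f ∅ = ∅
      show toSet (F (toFun (∅ : Set (Fin 5)))) = ∅
      have h1 : toFun (∅ : Set (Fin 5)) = fun _ => false := by
        funext x; simp [toFun]
      have h2 : F (fun _ => false) = fun _ => false := by decide
      rw [h1, h2, toSet_false]
    · -- f univ = univ
      show toSet (F (toFun (Set.univ : Set (Fin 5)))) = Set.univ
      have h1 : toFun (Set.univ : Set (Fin 5)) = fun _ => true := by
        funext x; simp [toFun]
      have h2 : F (fun _ => true) = fun _ => true := by decide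
      rw [h1, h2, toSet_true]
    · -- union
      intro A B hA hB
      rw [regClosed_iff r1 r1_refl r1_trans] at hA hB
      show toSet (F (toFun (A ∪ B))) = toSet (F (toFun A)) ∪ toSet (F (toFun B))
      rw [toFun_union, ← toSet_union]
      exact congrArg toSet (key4 _ _ hA hB)
    · -- complement
      intro A hA
      rw [regClosed_iff r1 r1_refl r1_trans] at hA
      have hAc : Aᶜ = toSet (fun x => ! toFun A x) := by
        rw [toSet_compl, toSet_toFun]
      show toSet (F (toFun (@closure _ (topo r1) Aᶜ)))
          = @closure _ (topo r2) (toSet (F (toFun A)))ᶜ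
      rw [hAc, closure_toSet r1 r1_refl r1_trans, toFun_toSet,
        ← toSet_compl, closure_toSet r2 r2_refl r2_trans]
      exact congrArg toSet (key5 _ hA)
    · -- contact
      intro A B hA hB
      rw [regClosed_iff r1 r1_refl r1_trans] at hA hB
      show (A ∩ B).Nonempty ↔ (toSet (F (toFun A)) ∩ toSet (F (toFun B))).Nonempty
      rw [inter_nonempty_iff A B, toSet_inter_nonempty]
      exact key6 _ _ hA hB
  · -- witness A
    refine ⟨toSet ![true, true, true, true, false], ?_, ?_, ?_⟩
    · rw [regClosed_iff r1 r1_refl r1_trans, toFun_toSet]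
      decide
    · rw [interior_toSet r1 r1_refl r1_trans]
      constructor
      · exact ⟨1, mem_toSet.mpr (by decide)⟩
      · rw [isPreconnected_toSet_iff r1 r1_refl r1_trans]
        decide
    · show ¬ @IsPreconnected _ (topo r2)
        (@interior _ (topo r2) (toSet (F (toFun (toSet ![true, true, true, true, false])))))
      rw [toFun_toSet, interior_toSet r2 r2_refl r2_trans,
        isPreconnected_toSet_iff r2 r2_refl r2_trans]
      decide
end

section
/- Let X₁ and X₂ be topological spaces and let f be a contact-preserving Boolean isomorphism between their regular closed algebras. If there is a regular closed subset A of X₁ whose interior is a nonempty connected subspace of X₁ while the interior of f(A) is not a preconnected subspace of X₂, then the family of regular closed subsets of X₁ has at least eight elements (and hence so does that of X₂). -/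
lemma regClosed_closure_isOpen {X : Type} [TopologicalSpace X] {O : Set X} (hO : IsOpen O) :
    RegClosed (closure O) := by
  refine subset_antisymm ?_ ?_
  · exact closure_mono (hO.subset_interior_iff.mpr subset_closure)
  · exact (closure_mono interior_subset).trans (by rw [closure_closure])

lemma RegClosed.isClosed {X : Type} [TopologicalSpace X] {A : Set X} (hA : RegClosed A) :
    IsClosed A := hA ▸ isClosed_closure

lemma RegClosed.union {X : Type} [TopologicalSpace X] {A B : Set X}
    (hA : RegClosed A) (hB : RegClosed B) : RegClosed (A ∪ B) := by
  refine subset_antisymm ?_ ?_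
  · refine Set.union_subset ?_ ?_
    · exact hA.le.trans (closure_mono (interior_mono Set.subset_union_left))
    · exact hB.le.trans (closure_mono (interior_mono Set.subset_union_right))
  · exact (closure_mono interior_subset).trans ((hA.isClosed.union hB.isClosed).closure_subset)

lemma regClosed_empty {X : Type} [TopologicalSpace X] : RegClosed (∅ : Set X) := by
  simp [RegClosed]

lemma notMem_closure_of_open {X : Type} [TopologicalSpace X] {U t : Set X} {x : X}
    (hU : IsOpen U) (hx : x ∈ U) (h : U ∩ t = ∅) : x ∉ closure t := by
  intro hc
  obtain ⟨y, hy⟩ := mem_closure_iff.mp hc U hU hx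
  exact absurd (h ▸ hy) (Set.notMem_empty y)

/-- If f is a contact-preserving Boolean isomorphism between the
regular closed algebras of X₁ and X₂ and some regular closed A ⊆ X₁ has a nonempty
connected interior while the interior of f(A) is not preconnected, then the family
of regular closed subsets of X₁ has at least eight elements (and hence so does that
of X₂). -/
theorem stmt11 {X₁ X₂ : Type} [TopologicalSpace X₁] [TopologicalSpace X₂]
    (f : Set X₁ → Set X₂) (hf : ContactIso f)
    (A : Set X₁) (hA : RegClosed A)
    (hAc : IsConnected (interior A))
    (hfA : ¬ IsPreconnected (interior (f A))) :
    (∃ s : Finset (Set X₁), (↑s : Set (Set X₁)) ⊆ {B : Set X₁ | RegClosed B} ∧ 8 ≤ s.card) ∧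
    (∃ s : Finset (Set X₂), (↑s : Set (Set X₂)) ⊆ {B : Set X₂ | RegClosed B} ∧ 8 ≤ s.card) := by
  obtain ⟨hbij, hempty, huniv, hunion, hcomp, hcontact⟩ := hf
  have hfA_rc : RegClosed (f A) := hbij.mapsTo hA
  set s : Set X₂ := interior (f A) with hs_def
  have hs_open : IsOpen s := isOpen_interior
  -- extract a separation
  rw [IsPreconnected] at hfA
  push_neg at hfA
  obtain ⟨u, v, hu, hv, hsuv, hsu, hsv, hsep⟩ := hfA
  obtain ⟨b, hb⟩ := hsu
  obtain ⟨c, hc⟩ := hsv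
  have hbu : b ∈ u ∩ s := ⟨hb.2, hb.1⟩
  have hcv : c ∈ v ∩ s := ⟨hc.2, hc.1⟩
  -- the three basic open sets and their closures
  have hdisj : (u ∩ s) ∩ (v ∩ s) = ∅ := by
    ext x; simp only [Set.mem_inter_iff, Set.mem_empty_iff_false, iff_false]
    rintro ⟨⟨hxu, hxs⟩, hxv, -⟩
    exact absurd (hsep ▸ (⟨hxs, hxu, hxv⟩ : x ∈ s ∩ (u ∩ v))) (Set.notMem_empty x)
  set B : Set X₂ := closure (u ∩ s) with hB_def
  set C : Set X₂ := closure (v ∩ s) with hC_def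
  have hB_rc : RegClosed B := regClosed_closure_isOpen (hu.inter hs_open)
  have hC_rc : RegClosed C := regClosed_closure_isOpen (hv.inter hs_open)
  have hBC : B ∪ C = f A := by
    rw [hB_def, hC_def, ← closure_union]
    have : (u ∩ s) ∪ (v ∩ s) = s := by
      apply subset_antisymm
      · rintro x (⟨-, hx⟩ | ⟨-, hx⟩) <;> exact hx
      · intro x hx
        rcases hsuv hx with h | h
        · exact Or.inl ⟨h, hx⟩
        · exact Or.inr ⟨h, hx⟩
    rw [this, ← hfA_rc]
  have hbB : b ∈ B := subset_closure hbu
  have hcC : c ∈ C := subset_closure hcv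
  have hbC : b ∉ C := notMem_closure_of_open (hu.inter hs_open) hbu hdisj
  have hcB : c ∉ B := notMem_closure_of_open (hv.inter hs_open) hcv
    (by rw [Set.inter_comm]; exact hdisj)
  have hs_compl : s ∩ (f A)ᶜ = ∅ := by
    rw [← Set.disjoint_iff_inter_eq_empty]
    exact Set.disjoint_compl_right_iff_subset.mpr interior_subset
  have hbD : b ∉ closure (f A)ᶜ := notMem_closure_of_open hs_open hb.1 hs_compl
  have hcD : c ∉ closure (f A)ᶜ := notMem_closure_of_open hs_open hc.1 hs_compl
  -- pull back B and C
  obtain ⟨A₁, hA₁, hfA₁⟩ := hbij.surjOn hB_rc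
  obtain ⟨A₂, hA₂, hfA₂⟩ := hbij.surjOn hC_rc
  have hA₁rc : RegClosed A₁ := hA₁
  have hA₂rc : RegClosed A₂ := hA₂
  have hA12 : A₁ ∪ A₂ = A := by
    apply hbij.injOn (hA₁rc.union hA₂rc) hA
    rw [hunion A₁ A₂ hA₁rc hA₂rc, hfA₁, hfA₂, hBC]
  have hA₁ne : ¬ interior A ⊆ A₁ := by
    intro h
    have hAA : A = A₁ := subset_antisymm (hA ▸ (closure_minimal h hA₁rc.isClosed))
      (hA12 ▸ Set.subset_union_left)
    exact hcB (hfA₁ ▸ hAA ▸ (hBC ▸ (Set.mem_union_right B hcC) : c ∈ f A))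
  have hA₂ne : ¬ interior A ⊆ A₂ := by
    intro h
    have hAA : A = A₂ := subset_antisymm (hA ▸ (closure_minimal h hA₂rc.isClosed))
      (hA12 ▸ Set.subset_union_right)
    exact hbC (hfA₂ ▸ hAA ▸ (hBC ▸ (Set.mem_union_left C hbB) : b ∈ f A))
  -- connectedness of interior A forces A₁ ∩ A₂ ≠ ∅
  have hA12ne : (A₁ ∩ A₂).Nonempty := by
    by_contra hA12e
    rw [Set.not_nonempty_iff_eq_empty] at hA12e
    obtain ⟨p, hp⟩ := hAc.2 A₂ᶜ A₁ᶜ hA₂rc.isClosed.isOpen_compl hA₁rc.isClosed.isOpen_compl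
      (by
        intro x hx
        by_contra hxc
        simp only [Set.mem_union, Set.mem_compl_iff, not_or, not_not] at hxc
        exact absurd (hA12e ▸ (⟨hxc.2, hxc.1⟩ : x ∈ A₁ ∩ A₂)) (Set.notMem_empty x))
      (by
        obtain ⟨x, hx⟩ := Set.not_subset.mp hA₂ne
        exact ⟨x, hx.1, hx.2⟩)
      (by
        obtain ⟨x, hx⟩ := Set.not_subset.mp hA₁ne
        exact ⟨x, hx.1, hx.2⟩)
    have : p ∈ A₁ ∪ A₂ := hA12 ▸ interior_subset hp.1
    rcases this with h | h
    · exact hp.2.2 h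
    · exact hp.2.1 h
  have hBCne : (B ∩ C).Nonempty := by
    obtain ⟨y, hy⟩ := (hcontact A₁ A₂ hA₁rc hA₂rc).mp hA12ne
    exact ⟨y, hfA₁ ▸ hy.1, hfA₂ ▸ hy.2⟩
  -- a point outside f A exists
  obtain ⟨y, hyB, hyC⟩ := hBCne
  have hyfA : y ∈ f A := hBC ▸ Set.mem_union_left C hyB
  have hys : y ∉ s := by
    intro hys
    rcases hsuv hys with h | h
    · obtain ⟨z, hz⟩ := mem_closure_iff.mp hyC (u ∩ s) (hu.inter hs_open) ⟨h, hys⟩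
      exact absurd (hdisj ▸ (⟨hz.1, hz.2⟩ : z ∈ (u ∩ s) ∩ (v ∩ s))) (Set.notMem_empty z)
    · obtain ⟨z, hz⟩ := mem_closure_iff.mp hyB (v ∩ s) (hv.inter hs_open) ⟨h, hys⟩
      exact absurd (hdisj ▸ (⟨hz.2, hz.1⟩ : z ∈ (u ∩ s) ∩ (v ∩ s))) (Set.notMem_empty z)
  have hfAne : (f A)ᶜ.Nonempty := by
    by_contra h
    rw [Set.not_nonempty_iff_eq_empty, Set.compl_empty_iff] at h
    exact hys (by rw [hs_def, h, interior_univ]; trivial)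
  obtain ⟨d, hd⟩ := hfAne
  have hdB : d ∉ B := fun h => hd (hBC ▸ Set.mem_union_left C h)
  have hdC : d ∉ C := fun h => hd (hBC ▸ Set.mem_union_right B h)
  have hdD : d ∈ closure (f A)ᶜ := subset_closure hd
  -- build the eight regular closed sets in X₂
  set P : Fin 3 → Set X₂ := ![B, C, closure (f A)ᶜ] with hP_def
  have hP_rc : ∀ i, RegClosed (P i) := by
    intro i
    fin_cases i
    · exact hB_rc
    · exact hC_rc
    · exact regClosed_closure_isOpen hfA_rc.isClosed.isOpen_compl
  set x : Fin 3 → X₂ := ![b, c, d] with hx_def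
  have hxP : ∀ i, x i ∈ P i := by
    intro i; fin_cases i
    · exact hbB
    · exact hcC
    · exact hdD
  have hxP' : ∀ i j, i ≠ j → x i ∉ P j := by
    intro i j hij
    fin_cases i <;> fin_cases j <;>
      simp only [hx_def, hP_def, Matrix.cons_val_zero, Matrix.cons_val_one, Matrix.head_cons,
        Matrix.cons_val_two, Matrix.tail_cons, Fin.isValue] <;>
      first
        | exact absurd rfl hij
        | exact hbC | exact hbD | exact hcB | exact hcD | exact hdB | exact hdC
  set m : Finset (Fin 3) → Set X₂ := fun T => ⋃ i ∈ T, P i with hm_def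
  classical
  have hm_rc : ∀ T, RegClosed (m T) := by
    intro T
    induction T using Finset.induction_on with
    | empty =>
      have : m ∅ = ∅ := by simp [hm_def]
      rw [this]; exact regClosed_empty
    | @insert a T' ha ih =>
      have : m (insert a T') = P a ∪ m T' := by
        simp [hm_def, Finset.set_biUnion_insert]
      rw [this]
      exact (hP_rc a).union ih
  have hmem : ∀ T i, x i ∈ m T ↔ i ∈ T := by
    intro T i
    constructor
    · intro h
      simp only [hm_def, Set.mem_iUnion] at h
      obtain ⟨j, hj, hxj⟩ := h
      by_cases hij : i = j
      · exact hij ▸ hj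
      · exact absurd hxj (hxP' i j hij)
    · intro h
      exact Set.mem_biUnion h (hxP i)
  have hm_inj : Function.Injective m := by
    intro T T' h
    ext i
    rw [← hmem T i, h, hmem T' i]
  set s₂ : Finset (Set X₂) := Finset.image m Finset.univ with hs₂_def
  have hs₂sub : (↑s₂ : Set (Set X₂)) ⊆ {B : Set X₂ | RegClosed B} := by
    intro S hS
    simp only [hs₂_def, Finset.coe_image, Set.mem_image] at hS
    obtain ⟨T, -, rfl⟩ := hS
    exact hm_rc T
  have hs₂card : s₂.card = 8 := by
    rw [hs₂_def, Finset.card_image_of_injective _ hm_inj]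
    simp
  -- transfer to X₁ via the inverse
  set g : Set X₂ → Set X₁ := Function.invFunOn f {A : Set X₁ | RegClosed A} with hg_def
  have hg_bij : Set.BijOn g {B : Set X₂ | RegClosed B} {A : Set X₁ | RegClosed A} :=
    Set.BijOn.symm hbij.invOn_invFunOn.symm hbij
  refine ⟨⟨s₂.image g, ?_, ?_⟩, ⟨s₂, hs₂sub, hs₂card.ge⟩⟩
  · intro S hS
    simp only [Finset.coe_image, Set.mem_image] at hS
    obtain ⟨T, hT, rfl⟩ := hS
    exact hg_bij.mapsTo (hs₂sub hT)
  · rw [Finset.card_image_of_injOn (fun a ha b hb => hg_bij.injOn (hs₂sub ha) (hs₂sub hb))]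
    exact hs₂card.ge
end

section
/- Let X be a topological space with exactly three points. If X has at least eight regular closed subsets, then every subset of X is regular closed and the topology of X is discrete. -/
/-- If X is a topological space with exactly three points and X has at
least eight regular closed subsets, then every subset of X is regular closed and the
topology of X is discrete. -/
theorem stmt15 {X : Type} [TopologicalSpace X]
    (hcard : Nat.card X = 3)
    (hRC : 8 ≤ {A : Set X | A = closure (interior A)}.ncard) :
    (∀ A : Set X, A = closure (interior A)) ∧ DiscreteTopology X := by
  have hfin : Finite X := Nat.finite_of_card_ne_zero (by omega)
  have : Fintype X := Fintype.ofFinite X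
  have hcards : Nat.card (Set X) = 8 := by
    rw [Nat.card_eq_fintype_card, Fintype.card_set, ← Nat.card_eq_fintype_card, hcard]
    norm_num
  have huniv : (Set.univ : Set (Set X)).ncard = 8 := by
    rw [Set.ncard_univ, hcards]
  have hall : {A : Set X | A = closure (interior A)} = Set.univ := by
    exact Set.eq_of_subset_of_ncard_le (Set.subset_univ _) (huniv ▸ hRC) Set.finite_univ
  have hreg : ∀ A : Set X, A = closure (interior A) := fun A => by
    have : A ∈ Set.univ := Set.mem_univ A
    rw [← hall] at this; exact this
  refine ⟨hreg, ?_⟩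
  rw [discreteTopology_iff_forall_isClosed]
  intro A
  rw [hreg A]
  exact isClosed_closure
end
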